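/- Suppose q(x,y) := Δ(x−y) where Δ : ℝ → [0,∞) is an even continuous function supported on [−s,s] and positive on (−s,s) with ∫Δ = 1, π is an even positive continuous probability density on ℝ, and for every u ∈ [0,s] the limit τ(u) := lim_{x→+∞} π(x+u)/π(x) exists in [0,1]. Then the limit β_∞ := lim_{a→+∞} β_a exists and equals 2 ∫_0^s Δ(u) τ(u)^{1/2} du, where β_a := ∫_{−s}^{s} sup_{|x|>a} √(t(x,x+u)·t(x+u,x)) du. -/

import Mathlib

open MeasureTheory Filter Topology

noncomputable section

/-- The probability measure on `ℝ` with density `π` w.r.t. Lebesgue measure. -/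
def piMeas (π : ℝ → ℝ) : Measure ℝ := volume.withDensity fun x => ENNReal.ofReal (π x)

/-- `t(x,y) = min(q(x,y), π(y) q(y,x) / π(x))`. -/
def mhT (π : ℝ → ℝ) (q : ℝ → ℝ → ℝ) (x y : ℝ) : ℝ := min (q x y) (π y * q y x / π x)

/-- The rejection probability `r(x) = 1 - ∫ t(x,y) dy`. -/
def mhR (π : ℝ → ℝ) (q : ℝ → ℝ → ℝ) (x : ℝ) : ℝ := 1 - ∫ y, mhT π q x y

/-- If `f` tends to `L` at `+∞` and `-∞`, the sup over `{|x| > a}` tends to `L`. -/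
lemma aux_sSup_tendsto {f : ℝ → ℝ} {L : ℝ}
    (h1 : Tendsto f atTop (𝓝 L)) (h2 : Tendsto f atBot (𝓝 L)) :
    Tendsto (fun a : ℝ => sSup (f '' {x | a < |x|})) atTop (𝓝 L) := by
  rw [Metric.tendsto_nhds]
  intro ε hε
  have hε2 : 0 < ε / 2 := by positivity
  obtain ⟨A, hA⟩ := eventually_atTop.mp (Metric.tendsto_nhds.mp h1 (ε / 2) hε2)
  obtain ⟨B, hB⟩ := eventually_atBot.mp (Metric.tendsto_nhds.mp h2 (ε / 2) hε2)
  filter_upwards [eventually_ge_atTop (max (max |A| |B|) 0)] with a ha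
  have ha0 : 0 ≤ a := le_trans (le_max_right _ _) ha
  have haA : |A| ≤ a := le_trans (le_trans (le_max_left _ _) (le_max_left _ _)) ha
  have haB : |B| ≤ a := le_trans (le_trans (le_max_right _ _) (le_max_left _ _)) ha
  have key : ∀ x ∈ {x : ℝ | a < |x|}, dist (f x) L < ε / 2 := by
    intro x hx
    simp only [Set.mem_setOf_eq] at hx
    rcases le_or_gt 0 x with h0 | h0
    · have : A ≤ x := by
        have hAx : |A| < |x| := lt_of_le_of_lt haA hx
        rw [abs_of_nonneg h0] at hAx
        linarith [le_abs_self A]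
      exact hA x this
    · have : x ≤ B := by
        have hBx : |B| < |x| := lt_of_le_of_lt haB hx
        rw [abs_of_neg h0] at hBx
        linarith [neg_abs_le B]
      exact hB x this
  have hmem : (a + 1) ∈ {x : ℝ | a < |x|} := by
    simp only [Set.mem_setOf_eq]
    rw [abs_of_nonneg (by linarith)]
    linarith
  have hne : (f '' {x : ℝ | a < |x|}).Nonempty := ⟨f (a + 1), Set.mem_image_of_mem f hmem⟩
  have hub : ∀ y ∈ f '' {x : ℝ | a < |x|}, y ≤ L + ε / 2 := by
    rintro _ ⟨x, hx, rfl⟩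
    have := key x hx
    rw [Real.dist_eq, abs_lt] at this
    linarith [this.2]
  have hUp : sSup (f '' {x : ℝ | a < |x|}) ≤ L + ε / 2 := csSup_le hne hub
  have hLow : L - ε / 2 ≤ sSup (f '' {x : ℝ | a < |x|}) := by
    have h1' : L - ε / 2 ≤ f (a + 1) := by
      have := key _ hmem
      rw [Real.dist_eq, abs_lt] at this
      linarith [this.1]
    exact le_trans h1' (le_csSup ⟨L + ε / 2, hub⟩ (Set.mem_image_of_mem f hmem))
  rw [Real.dist_eq, abs_lt]
  constructor <;> linarith

lemma aux_min_mul {p q : ℝ} (hp : 0 < p) (hq : 0 < q) :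
    min 1 (p / q) * min 1 (q / p) = min (p / q) (q / p) := by
  rcases le_total p q with h | h
  · rw [min_eq_right ((div_le_one hq).mpr h), min_eq_left ((one_le_div hp).mpr h),
      min_eq_left (by rw [div_le_div_iff₀ hq hp]; nlinarith)]
    ring
  · rw [min_eq_left ((one_le_div hq).mpr h), min_eq_right ((div_le_one hp).mpr h),
      min_eq_right (by rw [div_le_div_iff₀ hp hq]; nlinarith)]
    ring

lemma aux_key_eq (Δ : ℝ → ℝ) (π : ℝ → ℝ) (hΔnn : ∀ u, 0 ≤ Δ u)
    (hΔeven : ∀ u, Δ (-u) = Δ u) (hπpos : ∀ x, 0 < π x) (u x : ℝ) :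
    Real.sqrt (mhT π (fun x y => Δ (x - y)) x (x + u) *
        mhT π (fun x y => Δ (x - y)) (x + u) x)
      = Δ u * Real.sqrt (min (π (x + u) / π x) (π x / π (x + u))) := by
  have h1 : x - (x + u) = -u := by ring
  have h2 : x + u - x = u := by ring
  have e1 : mhT π (fun x y => Δ (x - y)) x (x + u) = Δ u * min 1 (π (x + u) / π x) := by
    unfold mhT
    simp only [h1, h2, hΔeven]
    rw [mul_min_of_nonneg _ _ (hΔnn u), mul_one]
    congr 1
    field_simp
  have e2 : mhT π (fun x y => Δ (x - y)) (x + u) x = Δ u * min 1 (π x / π (x + u)) := by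
    unfold mhT
    simp only [h1, h2, hΔeven]
    rw [mul_min_of_nonneg _ _ (hΔnn u), mul_one]
    congr 1
    field_simp
  rw [e1, e2]
  have : Δ u * min 1 (π (x + u) / π x) * (Δ u * min 1 (π x / π (x + u)))
      = Δ u ^ 2 * (min (π (x + u) / π x) (π x / π (x + u))) := by
    rw [← aux_min_mul (hπpos (x + u)) (hπpos x)]
    ring
  rw [this, Real.sqrt_mul (sq_nonneg _), Real.sqrt_sq (hΔnn u)]

lemma aux_min_tendsto_top {π : ℝ → ℝ} (hπpos : ∀ x, 0 < π x) {τv v : ℝ}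
    (hlim : Tendsto (fun x => π (x + v) / π x) atTop (𝓝 τv))
    (h0 : 0 ≤ τv) (h1 : τv ≤ 1) :
    Tendsto (fun x => min (π (x + v) / π x) (π x / π (x + v))) atTop (𝓝 τv) := by
  have hinv : ∀ x : ℝ, π x / π (x + v) = (π (x + v) / π x)⁻¹ := by
    intro x; rw [inv_div]
  rcases eq_or_lt_of_le h0 with h | h
  · have hle : ∀ x : ℝ, min (π (x + v) / π x) (π x / π (x + v)) ≤ π (x + v) / π x :=
      fun x => min_le_left _ _
    have hge : ∀ x : ℝ, 0 ≤ min (π (x + v) / π x) (π x / π (x + v)) :=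
      fun x => le_min (div_nonneg (hπpos _).le (hπpos _).le)
        (div_nonneg (hπpos _).le (hπpos _).le)
    rw [← h] at hlim ⊢
    exact squeeze_zero hge hle hlim
  · have hinvlim : Tendsto (fun x => π x / π (x + v)) atTop (𝓝 τv⁻¹) := by
      simp only [hinv]
      exact hlim.inv₀ (ne_of_gt h)
    have hmin : τv ≤ τv⁻¹ := by
      have hmul : τv⁻¹ * τv = 1 := inv_mul_cancel₀ (ne_of_gt h)
      nlinarith
    have := hlim.min hinvlim
    rwa [min_eq_left hmin] at this

lemma aux_min_tendsto_bot {π : ℝ → ℝ} (hπpos : ∀ x, 0 < π x) (hπeven : ∀ x, π (-x) = π x)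
    {τv v : ℝ} (hlim : Tendsto (fun x => π (x + v) / π x) atTop (𝓝 τv))
    (h0 : 0 ≤ τv) (h1 : τv ≤ 1) :
    Tendsto (fun x => min (π (x + v) / π x) (π x / π (x + v))) atBot (𝓝 τv) := by
  have hcomp : (fun x : ℝ => min (π (x + v) / π x) (π x / π (x + v)))
      = (fun y : ℝ => min (π (y + v) / π y) (π y / π (y + v))) ∘ (fun x : ℝ => -x - v) := by
    funext x
    simp only [Function.comp_apply]
    have e1 : π (-x - v + v) = π x := by
      rw [show -x - v + v = -x by ring, hπeven]
    have e2 : π (-x - v) = π (x + v) := by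
      rw [show -x - v = -(x + v) by ring, hπeven]
    rw [e1, e2, min_comm]
  rw [hcomp]
  have htend : Tendsto (fun x : ℝ => -x - v) atBot atTop := by
    simp only [sub_eq_add_neg]
    exact tendsto_atTop_add_const_right _ (-v) tendsto_neg_atBot_atTop
  exact (aux_min_tendsto_top hπpos hlim h0 h1).comp htend

lemma aux_min_tendsto_abs {π : ℝ → ℝ} (hπpos : ∀ x, 0 < π x) (hπeven : ∀ x, π (-x) = π x)
    {u t : ℝ} (hlim : Tendsto (fun x => π (x + |u|) / π x) atTop (𝓝 t))
    (h0 : 0 ≤ t) (h1 : t ≤ 1) :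
    Tendsto (fun x => min (π (x + u) / π x) (π x / π (x + u))) atTop (𝓝 t) ∧
      Tendsto (fun x => min (π (x + u) / π x) (π x / π (x + u))) atBot (𝓝 t) := by
  rcases le_or_gt 0 u with h | h
  · rw [abs_of_nonneg h] at hlim
    exact ⟨aux_min_tendsto_top hπpos hlim h0 h1, aux_min_tendsto_bot hπpos hπeven hlim h0 h1⟩
  · rw [abs_of_neg h] at hlim
    have hcomp : (fun x : ℝ => min (π (x + u) / π x) (π x / π (x + u)))
        = (fun y : ℝ => min (π (y + -u) / π y) (π y / π (y + -u))) ∘ (fun x : ℝ => x + u) := by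
      funext x
      simp only [Function.comp_apply, show x + u + -u = x by ring]
      exact min_comm _ _
    rw [hcomp]
    exact ⟨(aux_min_tendsto_top hπpos hlim h0 h1).comp
        (tendsto_atTop_add_const_right _ u tendsto_id),
      (aux_min_tendsto_bot hπpos hπeven hlim h0 h1).comp
        (tendsto_atBot_add_const_right _ u tendsto_id)⟩

theorem betainfty_limit
    (s : ℝ) (hs : 0 < s)
    (Δ : ℝ → ℝ) (hΔnn : ∀ u, 0 ≤ Δ u) (hΔcont : Continuous Δ)
    (hΔeven : ∀ u, Δ (-u) = Δ u)
    (hΔsupp : ∀ u, s < |u| → Δ u = 0)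
    (hΔpos : ∀ u ∈ Set.Ioo (-s) s, 0 < Δ u)
    (hΔint : ∫ u, Δ u = 1)
    (π : ℝ → ℝ) (hπpos : ∀ x, 0 < π x) (hπcont : Continuous π)
    (hπeven : ∀ x, π (-x) = π x) (hπprob : ∫ x, π x = 1)
    (τ : ℝ → ℝ)
    (hτ : ∀ u ∈ Set.Icc 0 s, Tendsto (fun x => π (x + u) / π x) atTop (𝓝 (τ u)))
    (hτmem : ∀ u ∈ Set.Icc 0 s, τ u ∈ Set.Icc (0 : ℝ) 1) :
    Tendsto
      (fun a : ℝ => ∫ u in (-s)..s,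
        sSup ((fun x => Real.sqrt (mhT π (fun x y => Δ (x - y)) x (x + u) *
            mhT π (fun x y => Δ (x - y)) (x + u) x)) '' {x | a < |x|}))
      atTop
      (𝓝 (2 * ∫ u in (0 : ℝ)..s, Δ u * Real.sqrt (τ u))) := by
  have hle : (-s) ≤ s := by linarith
  -- notation
  set G : ℝ → ℝ → ℝ :=
    fun u x => Δ u * Real.sqrt (min (π (x + u) / π x) (π x / π (x + u))) with hG
  set L : ℝ → ℝ := fun u => Δ u * Real.sqrt (τ |u|) with hL
  set h : ℝ → ℝ → ℝ := fun a u => sSup ((fun x => G u x) '' {x | a < |x|}) with hh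
  -- rewrite the integrand using the key identity
  have hrw : (fun a : ℝ => ∫ u in (-s)..s,
      sSup ((fun x => Real.sqrt (mhT π (fun x y => Δ (x - y)) x (x + u) *
          mhT π (fun x y => Δ (x - y)) (x + u) x)) '' {x | a < |x|}))
      = fun a : ℝ => ∫ u in Set.Ioc (-s) s, h a u := by
    funext a
    rw [intervalIntegral.integral_of_le hle]
    congr 1
    funext u
    congr 1
    exact Set.image_congr' (fun x => aux_key_eq Δ π hΔnn hΔeven hπpos u x)
  rw [hrw]
  -- basic bounds on G
  have hGnn : ∀ u x, 0 ≤ G u x := fun u x => mul_nonneg (hΔnn u) (Real.sqrt_nonneg _)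
  have hGle : ∀ u x, G u x ≤ Δ u := by
    intro u x
    have hm1 : min (π (x + u) / π x) (π x / π (x + u)) ≤ 1 := by
      rcases le_total (π (x + u)) (π x) with hc | hc
      · exact le_trans (min_le_left _ _) ((div_le_one (hπpos x)).mpr hc)
      · exact le_trans (min_le_right _ _) ((div_le_one (hπpos (x + u))).mpr hc)
    have : Real.sqrt (min (π (x + u) / π x) (π x / π (x + u))) ≤ 1 := by
      have := Real.sqrt_le_sqrt hm1
      rwa [Real.sqrt_one] at this
    calc G u x ≤ Δ u * 1 := mul_le_mul_of_nonneg_left this (hΔnn u)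
      _ = Δ u := mul_one _
  -- continuity of G in u for fixed x
  have hGcont : ∀ x, Continuous (fun u => G u x) := by
    intro x
    apply hΔcont.mul
    apply Real.continuous_sqrt.comp
    apply Continuous.min
    · exact (hπcont.comp (continuous_const.add continuous_id)).div continuous_const
        (fun _ => ne_of_gt (hπpos x))
    · exact continuous_const.div (hπcont.comp (continuous_const.add continuous_id))
        (fun u => ne_of_gt (hπpos (x + u)))
  -- nonemptiness of the sup sets
  have hSne : ∀ a : ℝ, (|a| + 1) ∈ {x : ℝ | a < |x|} := by
    intro a
    simp only [Set.mem_setOf_eq]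
    rw [abs_of_nonneg (by positivity)]
    linarith [le_abs_self a, abs_nonneg a]
  have hbdd : ∀ a u, BddAbove ((fun x => G u x) '' {x : ℝ | a < |x|}) := by
    rintro a u
    exact ⟨Δ u, by rintro _ ⟨x, hx, rfl⟩; exact hGle u x⟩
  -- bounds on h
  have hhub : ∀ a u, h a u ≤ Δ u := by
    intro a u
    exact csSup_le ⟨G u (|a| + 1), Set.mem_image_of_mem _ (hSne a)⟩
      (by rintro _ ⟨x, hx, rfl⟩; exact hGle u x)
  have hhlb : ∀ a u, 0 ≤ h a u :=
    fun a u => le_trans (hGnn u (|a| + 1)) (le_csSup (hbdd a u)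
      (Set.mem_image_of_mem _ (hSne a)))
  -- measurability of h a via lower semicontinuity
  have hmeas : ∀ a : ℝ, Measurable (h a) := by
    intro a
    have hlsc : LowerSemicontinuous (h a) := by
      intro u₀ c hc
      obtain ⟨_, ⟨x, hxS, rfl⟩, hcx⟩ :=
        exists_lt_of_lt_csSup ⟨G u₀ (|a| + 1), Set.mem_image_of_mem _ (hSne a)⟩ hc
      have hopen : IsOpen {u : ℝ | c < G u x} := isOpen_lt continuous_const (hGcont x)
      filter_upwards [hopen.mem_nhds hcx] with u hu
      exact lt_of_lt_of_le hu (le_csSup (hbdd a u) (Set.mem_image_of_mem _ hxS))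
    exact hlsc.measurable
  -- pointwise limits
  have hLim : ∀ u ∈ Set.Icc (-s) s, Tendsto (fun a => h a u) atTop (𝓝 (L u)) := by
    intro u hu
    have habs : |u| ∈ Set.Icc (0 : ℝ) s := ⟨abs_nonneg u, abs_le.mpr ⟨hu.1, hu.2⟩⟩
    have hτm := hτmem |u| habs
    obtain ⟨htop, hbot⟩ := aux_min_tendsto_abs hπpos hπeven (hτ |u| habs) hτm.1 hτm.2
    have htop' : Tendsto (fun x => G u x) atTop (𝓝 (L u)) :=
      ((Real.continuous_sqrt.tendsto _).comp htop).const_mul (Δ u)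
    have hbot' : Tendsto (fun x => G u x) atBot (𝓝 (L u)) :=
      ((Real.continuous_sqrt.tendsto _).comp hbot).const_mul (Δ u)
    exact aux_sSup_tendsto htop' hbot'
  -- dominated convergence
  have hΔint' : Integrable Δ (volume.restrict (Set.Ioc (-s) s)) :=
    hΔcont.integrableOn_Ioc
  have main : Tendsto (fun a : ℝ => ∫ u in Set.Ioc (-s) s, h a u) atTop
      (𝓝 (∫ u in Set.Ioc (-s) s, L u)) := by
    apply tendsto_integral_filter_of_dominated_convergence Δ
    · exact Eventually.of_forall fun a => (hmeas a).aestronglyMeasurable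
    · refine Eventually.of_forall fun a => ?_
      filter_upwards [ae_restrict_mem measurableSet_Ioc] with u _
      rw [Real.norm_eq_abs, abs_of_nonneg (hhlb a u)]
      exact hhub a u
    · exact hΔint'
    · filter_upwards [ae_restrict_mem measurableSet_Ioc] with u hu
      exact hLim u (Set.Ioc_subset_Icc_self hu)
  -- identify the limit
  have hLmeas : AEStronglyMeasurable L (volume.restrict (Set.Ioc (-s) s)) := by
    apply aestronglyMeasurable_of_tendsto_ae (u := (atTop : Filter ℝ))
      (f := fun a u => h a u)
    · exact fun a => (hmeas a).aestronglyMeasurable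
    · filter_upwards [ae_restrict_mem measurableSet_Ioc] with u hu
      exact hLim u (Set.Ioc_subset_Icc_self hu)
  have hLbound : ∀ u, u ∈ Set.Icc (-s) s → ‖L u‖ ≤ Δ u := by
    intro u hu
    have habs : |u| ∈ Set.Icc (0 : ℝ) s := ⟨abs_nonneg u, abs_le.mpr ⟨hu.1, hu.2⟩⟩
    have hτm := hτmem |u| habs
    have h1 : Real.sqrt (τ |u|) ≤ 1 := by
      have := Real.sqrt_le_sqrt hτm.2
      rwa [Real.sqrt_one] at this
    rw [Real.norm_eq_abs, abs_of_nonneg (mul_nonneg (hΔnn u) (Real.sqrt_nonneg _))]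
    calc Δ u * Real.sqrt (τ |u|) ≤ Δ u * 1 := mul_le_mul_of_nonneg_left h1 (hΔnn u)
      _ = Δ u := mul_one _
  have hLint : IntegrableOn L (Set.Ioc (-s) s) := by
    apply Integrable.mono' hΔint' hLmeas
    filter_upwards [ae_restrict_mem measurableSet_Ioc] with u hu
    exact hLbound u (Set.Ioc_subset_Icc_self hu)
  have hint1 : IntervalIntegrable L volume (-s) 0 := by
    rw [intervalIntegrable_iff]
    apply hLint.mono_set
    rw [Set.uIoc_of_le (by linarith : (-s : ℝ) ≤ 0)]
    exact Set.Ioc_subset_Ioc_right hs.le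
  have hint2 : IntervalIntegrable L volume 0 s := by
    rw [intervalIntegrable_iff]
    apply hLint.mono_set
    rw [Set.uIoc_of_le hs.le]
    exact Set.Ioc_subset_Ioc_left (by linarith)
  have hneg : ∫ u in (-s)..(0 : ℝ), L u = ∫ u in (0 : ℝ)..s, L u := by
    have hcn := intervalIntegral.integral_comp_neg (a := (0 : ℝ)) (b := s) (f := L)
    simp only [neg_zero] at hcn
    rw [← hcn]
    apply intervalIntegral.integral_congr
    intro u _
    show L (-u) = L u
    simp only [hL, abs_neg, hΔeven]
  have hposint : ∫ u in (0 : ℝ)..s, L u = ∫ u in (0 : ℝ)..s, Δ u * Real.sqrt (τ u) := by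
    apply intervalIntegral.integral_congr
    intro u hu
    rw [Set.uIcc_of_le hs.le] at hu
    show L u = Δ u * Real.sqrt (τ u)
    simp only [hL, abs_of_nonneg hu.1]
  have hfinal : ∫ u in Set.Ioc (-s) s, L u = 2 * ∫ u in (0 : ℝ)..s, Δ u * Real.sqrt (τ u) := by
    rw [← intervalIntegral.integral_of_le hle,
      ← intervalIntegral.integral_add_adjacent_intervals hint1 hint2, hneg, hposint]
    ring
  rw [← hfinal]
  exact main

end
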